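/- Let y, b ∈ W^{1,1}(0,T) and g ∈ C(ℝ) satisfy y'(t) = g(y(t)) + b'(t) almost everywhere on [0,T] with y(0) = y⁰. Assume g(ξ) → -∞ as ξ → ∞, and that there exist constants N₀ ≥ 0, N₁ ≥ 0 with b(t₂) - b(t₁) ≤ N₀ + N₁(t₂ - t₁) for all 0 ≤ t₁ < t₂ ≤ T. If ξ₀ is a constant such that g(ξ) ≤ -N₁ for all ξ ≥ ξ₀, then y(t) ≤ max{y⁰, ξ₀} + N₀ for all t ∈ [0,T]. -/

import Mathlib

open MeasureTheory Set Filter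

/-- **Zlotnik's inequality.** If `y, b ∈ W^{1,1}(0,T)` (absolutely continuous with
integrable derivatives `y', b'`), `g` is continuous, `y' = g(y) + b'` a.e. on `[0,T]`,
`g(ξ) → -∞` as `ξ → ∞`, `b(t₂) - b(t₁) ≤ N₀ + N₁(t₂ - t₁)` for `0 ≤ t₁ < t₂ ≤ T`
with `N₀, N₁ ≥ 0`, and `g(ξ) ≤ -N₁` for all `ξ ≥ ξ₀`, then
`y(t) ≤ max{y(0), ξ₀} + N₀` on `[0,T]`. -/
theorem zlotnik_inequality
    (T : ℝ) (hT : 0 < T)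
    (y b y' b' : ℝ → ℝ) (g : ℝ → ℝ) (hg : Continuous g)
    (hy'int : IntegrableOn y' (Icc 0 T))
    (hb'int : IntegrableOn b' (Icc 0 T))
    (hy : ∀ t ∈ Icc (0 : ℝ) T, y t = y 0 + ∫ s in Ioc (0 : ℝ) t, y' s)
    (hb : ∀ t ∈ Icc (0 : ℝ) T, b t = b 0 + ∫ s in Ioc (0 : ℝ) t, b' s)
    (hode : ∀ᵐ t, t ∈ Icc (0 : ℝ) T → y' t = g (y t) + b' t)
    (hglim : Tendsto g atTop atBot)
    (N₀ N₁ : ℝ) (hN₀ : 0 ≤ N₀) (hN₁ : 0 ≤ N₁)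
    (hbineq : ∀ t₁ t₂ : ℝ, 0 ≤ t₁ → t₁ < t₂ → t₂ ≤ T →
      b t₂ - b t₁ ≤ N₀ + N₁ * (t₂ - t₁))
    (ξ₀ : ℝ) (hξ₀ : ∀ ξ, ξ₀ ≤ ξ → g ξ ≤ -N₁) :
    ∀ t ∈ Icc (0 : ℝ) T, y t ≤ max (y 0) ξ₀ + N₀ := by
  intro t ht
  obtain ⟨ht0, htT⟩ := ht
  by_contra hcon
  push_neg at hcon
  set M := max (y 0) ξ₀ with hM
  -- continuity of y on [0,T]
  have hycont : ContinuousOn y (Icc 0 T) := by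
    have h1 : ContinuousOn (fun x => y 0 + ∫ s in Ioc (0:ℝ) x, y' s) (Icc 0 T) :=
      continuousOn_const.add (intervalIntegral.continuousOn_primitive hy'int)
    exact h1.congr (fun x hx => hy x hx)
  -- the set of times ≤ t where y ≤ M
  set S : Set ℝ := Icc 0 t ∩ y ⁻¹' (Iic M) with hSdef
  have hS0 : (0:ℝ) ∈ S := ⟨⟨le_refl 0, ht0⟩, show y 0 ≤ M from le_max_left _ _⟩
  have hSbdd : BddAbove S := ⟨t, fun s hs => hs.1.2⟩
  have hSclosed : IsClosed S := by
    have hsub : Icc 0 t ⊆ Icc 0 T := Icc_subset_Icc le_rfl htT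
    exact ContinuousOn.preimage_isClosed_of_isClosed (hycont.mono hsub)
      isClosed_Icc isClosed_Iic
  set t₁ := sSup S with ht₁def
  have ht₁S : t₁ ∈ S := hSclosed.csSup_mem ⟨0, hS0⟩ hSbdd
  obtain ⟨⟨ht₁0, ht₁t⟩, hyt₁⟩ := ht₁S
  have hyt₁M : y t₁ ≤ M := hyt₁
  have ht₁lt : t₁ < t := by
    rcases lt_or_eq_of_le ht₁t with h | h
    · exact h
    · exfalso; rw [h] at hyt₁M; linarith
  -- on (t₁, t], y > M
  have hmid : ∀ s ∈ Ioc t₁ t, M < y s := by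
    intro s hs
    by_contra hle
    push_neg at hle
    have : s ∈ S := ⟨⟨le_trans ht₁0 hs.1.le, hs.2⟩, show y s ≤ M from hle⟩
    exact absurd (le_csSup hSbdd this) (not_le.mpr hs.1)
  -- integrability
  have hsub2 : Ioc t₁ t ⊆ Icc 0 T := fun s hs => ⟨le_trans ht₁0 hs.1.le, hs.2.trans htT⟩
  have hyI : IntegrableOn y' (Ioc t₁ t) := hy'int.mono_set hsub2
  have hbI : IntegrableOn b' (Ioc t₁ t) := hb'int.mono_set hsub2
  have hsub1 : Ioc (0:ℝ) t₁ ⊆ Icc 0 T := fun s hs => ⟨hs.1.le, hs.2.trans ht₁t |>.trans htT⟩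
  have hyI1 : IntegrableOn y' (Ioc 0 t₁) := hy'int.mono_set hsub1
  have hbI1 : IntegrableOn b' (Ioc 0 t₁) := hb'int.mono_set hsub1
  -- splitting integrals
  have hsplit : ∀ (f : ℝ → ℝ), IntegrableOn f (Ioc 0 t₁) → IntegrableOn f (Ioc t₁ t) →
      (∫ s in Ioc (0:ℝ) t, f s) = (∫ s in Ioc (0:ℝ) t₁, f s) + ∫ s in Ioc t₁ t, f s := by
    intro f h1 h2
    rw [← setIntegral_union (Set.Ioc_disjoint_Ioc_of_le le_rfl) measurableSet_Ioc h1 h2,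
      Ioc_union_Ioc_eq_Ioc ht₁0 ht₁lt.le]
  have hyeq : y t - y t₁ = ∫ s in Ioc t₁ t, y' s := by
    rw [hy t ⟨ht0, htT⟩, hy t₁ ⟨ht₁0, ht₁t.trans htT⟩, hsplit y' hyI1 hyI]; ring
  have hbeq : b t - b t₁ = ∫ s in Ioc t₁ t, b' s := by
    rw [hb t ⟨ht0, htT⟩, hb t₁ ⟨ht₁0, ht₁t.trans htT⟩, hsplit b' hbI1 hbI]; ring
  -- a.e. bound
  have hae : ∀ᵐ s ∂(volume.restrict (Ioc t₁ t)), y' s ≤ -N₁ + b' s := by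
    have h1 : ∀ᵐ s ∂(volume.restrict (Ioc t₁ t)), s ∈ Ioc t₁ t :=
      ae_restrict_mem measurableSet_Ioc
    have h2 := ae_restrict_of_ae (s := Ioc t₁ t) hode
    filter_upwards [h1, h2] with s hs hodes
    have hsIcc : s ∈ Icc 0 T := hsub2 hs
    rw [hodes hsIcc]
    have hξ : ξ₀ ≤ y s := le_trans (le_max_right _ _) (hmid s hs).le
    linarith [hξ₀ (y s) hξ]
  have hconstI : IntegrableOn (fun _ : ℝ => -N₁) (Ioc t₁ t) := integrableOn_const measure_Ioc_lt_top.ne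
  have hmono : (∫ s in Ioc t₁ t, y' s) ≤ ∫ s in Ioc t₁ t, (-N₁ + b' s) :=
    integral_mono_ae hyI (hconstI.add hbI) hae
  have hrhs : (∫ s in Ioc t₁ t, (-N₁ + b' s)) = -N₁ * (t - t₁) + ∫ s in Ioc t₁ t, b' s := by
    rw [integral_add hconstI hbI, setIntegral_const, Real.volume_real_Ioc_of_le ht₁lt.le,
      smul_eq_mul]
    ring
  have hbbound : b t - b t₁ ≤ N₀ + N₁ * (t - t₁) := hbineq t₁ t ht₁0 ht₁lt htT
  have : y t - y t₁ ≤ N₀ := by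
    rw [hyeq]
    calc (∫ s in Ioc t₁ t, y' s) ≤ -N₁ * (t - t₁) + ∫ s in Ioc t₁ t, b' s := by
          rw [← hrhs]; exact hmono
      _ = -N₁ * (t - t₁) + (b t - b t₁) := by rw [← hbeq]
      _ ≤ N₀ := by linarith
  linarith
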